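/- The relative entropy is strictly functorial for lens composition (composition part of the statement that KL is a strict loss model): let X, Y, Z be finite types, π a distribution on X with π x > 0 for all x, and c : X → Dist Y, d : Y → Dist Z channels with c x y > 0 and d y z > 0 for all x, y, z. Let c' : Y → Dist X and d' : Z → Dist Y be arbitrary channels (approximate inverses). Define the exact inversions c†(y)(x) = π x · c x y / (c∙π)(y) and d†(z)(y) = (c∙π)(y) · d y z / (d∙(c∙π))(z), the exact inversion of the copy-composite (d ∘² c)†(z)(x,y) = π x · c x y · d y z / (d∙(c∙π))(z) (a distribution on X × Y), and the copy-composite approximate inverse ρ(z)(x,y) = d'(z)(y) · c'(y)(x). Then for every z: D(ρ(z), (d ∘² c)†(z)) = D(d'(z), d†(z)) + ∑_y d'(z)(y) · D(c'(y), c†(y)). -/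

import Mathlib

open scoped BigOperators

/-- The relative entropy (Kullback–Leibler divergence) between two distributions on a
finite type, `D(p,q) = ∑ z, p z * log (p z / q z)`. -/
noncomputable def relEnt {Z : Type*} [Fintype Z] (p q : Z → ℝ) : ℝ :=
  ∑ z, p z * Real.log (p z / q z)

/-- The pushforward of a prior `π` along a channel `c`: `(c∙π) y = ∑ x, π x * c x y`. -/
noncomputable def push {X Y : Type*} [Fintype X] (π : X → ℝ) (c : X → Y → ℝ) (y : Y) : ℝ :=
  ∑ x, π x * c x y

/-- **The relative entropy is strictly functorial for lens composition** (composition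
part of the statement that `KL` is a strict loss model): the divergence from the
copy-composite of the approximate inverses to the exact inversion of the
copy-composite is the lens-composite of the divergences,
`D(ρ z, (d ∘² c)† z) = D(d' z, d† z) + ∑ y, d' z y * D(c' y, c† y)`. -/
theorem relEnt_strict_loss_model_comp
    {X Y Z : Type*} [Fintype X] [Fintype Y] [Fintype Z]
    (π : X → ℝ) (c : X → Y → ℝ) (d : Y → Z → ℝ)
    (c' : Y → X → ℝ) (d' : Z → Y → ℝ)
    (hπ : ∀ x, 0 < π x) (hπ₁ : ∑ x, π x = 1)
    (hc : ∀ x y, 0 < c x y) (hc₁ : ∀ x, ∑ y, c x y = 1)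
    (hd : ∀ y z, 0 < d y z) (hd₁ : ∀ y, ∑ z, d y z = 1)
    (hc'₀ : ∀ y x, 0 ≤ c' y x) (hc'₁ : ∀ y, ∑ x, c' y x = 1)
    (hd'₀ : ∀ z y, 0 ≤ d' z y) (hd'₁ : ∀ z, ∑ y, d' z y = 1) :
    ∀ z : Z,
      relEnt
          (fun xy : X × Y => d' z xy.2 * c' xy.2 xy.1)
          (fun xy : X × Y =>
            π xy.1 * c xy.1 xy.2 * d xy.2 z / push (push π c) d z)
        = relEnt (d' z)
            (fun y => push π c y * d y z / push (push π c) d z)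
          + ∑ y, d' z y * relEnt (c' y) (fun x => π x * c x y / push π c y) := by
  intro z
  have hX : Nonempty X := by
    by_contra h
    rw [not_nonempty_iff] at h
    simp [Finset.univ_eq_empty] at hπ₁
  have hQ : ∀ y, 0 < push π c y := fun y =>
    Finset.sum_pos (fun x _ => mul_pos (hπ x) (hc x y)) Finset.univ_nonempty
  have hY : Nonempty Y := by
    by_contra h
    rw [not_nonempty_iff] at h
    simpa [Finset.univ_eq_empty] using hc₁ (Classical.arbitrary X)
  have hP : 0 < push (push π c) d z :=
    Finset.sum_pos (fun y _ => mul_pos (hQ y) (hd y z)) Finset.univ_nonempty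
  simp only [relEnt]
  rw [Fintype.sum_prod_type_right, ← Finset.sum_add_distrib]
  refine Finset.sum_congr rfl fun y _ => ?_
  have h1 : d' z y * Real.log (d' z y / (push π c y * d y z / push (push π c) d z))
      = ∑ x, d' z y * c' y x *
          Real.log (d' z y / (push π c y * d y z / push (push π c) d z)) := by
    rw [← Finset.sum_mul, ← Finset.mul_sum, hc'₁ y, mul_one]
  rw [h1, Finset.mul_sum, ← Finset.sum_add_distrib]
  refine Finset.sum_congr rfl fun x _ => ?_
  rcases (hd'₀ z y).eq_or_lt with hdy | hdy
  · simp [← hdy]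
  rcases (hc'₀ y x).eq_or_lt with hcx | hcx
  · simp [← hcx]
  have key : (d' z y * c' y x) / (π x * c x y * d y z / push (push π c) d z)
      = (d' z y / (push π c y * d y z / push (push π c) d z))
        * (c' y x / (π x * c x y / push π c y)) := by
    have h2 := (hQ y).ne'
    have h3 := (hπ x).ne'
    have h4 := (hc x y).ne'
    have h5 := (hd y z).ne'
    have h6 := hP.ne'
    field_simp
  rw [key, Real.log_mul
    (ne_of_gt (div_pos hdy (div_pos (mul_pos (hQ y) (hd y z)) hP)))
    (ne_of_gt (div_pos hcx (div_pos (mul_pos (hπ x) (hc x y)) (hQ y))))]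
  ring
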